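/- For all real t > 0 and real x > 1, the function u(x,t) = (x(x−1)(x+2t))^{−1/2} satisfies 𝒟_t(u)(x,t) = ∂/∂x ( (x(x−1))^{1/2} / (2(x+2t)^{3/2}) ), where 𝒟_t acts in the variable t: 𝒟_t(u) = −(1/2)t(1+2t) ∂²u/∂t² − (1/2)(1+4t) ∂u/∂t − (1/4)u, and all fractional powers are the positive real ones. -/

import Mathlib

private lemma hdP (x p r : ℝ) (h : x + 2 * r ≠ 0) :
    HasDerivAt (fun s : ℝ => (x + 2 * s) ^ p) (p * (x + 2 * r) ^ (p - 1) * 2) r := by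
  have h1 : HasDerivAt (fun s : ℝ => x + 2 * s) 2 r := by
    simpa using (((hasDerivAt_id r).const_mul 2).const_add x)
  simpa [mul_assoc, Function.comp_def] using ((Real.hasDerivAt_rpow_const (p := p) (Or.inl h)).comp r h1)

/-- For `t > 0` and `x > 1`, the function `u(x,t) = (x(x−1)(x+2t))^{−1/2}` satisfies
`𝒟_t(u) = ∂/∂x ((x(x−1))^{1/2}/(2(x+2t)^{3/2}))`, where
`𝒟_t = −(1/2)t(1+2t)∂²/∂t² − (1/2)(1+4t)∂/∂t − 1/4` acts in the variable `t`. -/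
theorem stmt12 (t x : ℝ) (ht : 0 < t) (hx : 1 < x) :
    -(1/2) * t * (1 + 2 * t) *
        deriv (fun s : ℝ => deriv (fun r : ℝ => (x * (x - 1) * (x + 2 * r)) ^ (-(1/2) : ℝ)) s) t
      - (1/2) * (1 + 4 * t) * deriv (fun r : ℝ => (x * (x - 1) * (x + 2 * r)) ^ (-(1/2) : ℝ)) t
      - (1/4) * (x * (x - 1) * (x + 2 * t)) ^ (-(1/2) : ℝ)
    = deriv (fun y : ℝ => (y * (y - 1)) ^ ((1:ℝ)/2) / (2 * (y + 2 * t) ^ ((3:ℝ)/2))) x := by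
  have hx0 : 0 < x := lt_trans one_pos hx
  have hc : 0 < x * (x - 1) := mul_pos hx0 (by linarith)
  have hPt : 0 < x + 2 * t := by linarith
  have hop : IsOpen {s : ℝ | 0 < x + 2 * s} :=
    isOpen_lt continuous_const (by continuity)
  -- first t-derivative
  have hder : ∀ r : ℝ, 0 < x + 2 * r →
      deriv (fun s : ℝ => (x * (x - 1) * (x + 2 * s)) ^ (-(1/2) : ℝ)) r
        = -((x * (x - 1)) ^ (-(1/2) : ℝ) * (x + 2 * r) ^ (-(3/2) : ℝ)) := by
    intro r hr
    have hev : (fun s : ℝ => (x * (x - 1) * (x + 2 * s)) ^ (-(1/2) : ℝ))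
        =ᶠ[nhds r] fun s => (x * (x - 1)) ^ (-(1/2) : ℝ) * (x + 2 * s) ^ (-(1/2) : ℝ) := by
      filter_upwards [hop.mem_nhds hr] with s hs
      exact Real.mul_rpow hc.le (le_of_lt hs)
    rw [hev.deriv_eq,
      (((hdP x (-(1/2)) r hr.ne').const_mul ((x * (x - 1)) ^ (-(1/2) : ℝ)))).deriv,
      show (-(1/2) - 1 : ℝ) = -(3/2) by norm_num]
    ring
  -- second t-derivative
  have hder2 : deriv (fun s : ℝ =>
      deriv (fun r : ℝ => (x * (x - 1) * (x + 2 * r)) ^ (-(1/2) : ℝ)) s) t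
        = (x * (x - 1)) ^ (-(1/2) : ℝ) * (3 * (x + 2 * t) ^ (-(5/2) : ℝ)) := by
    have hev2 : (fun s : ℝ =>
        deriv (fun r : ℝ => (x * (x - 1) * (x + 2 * r)) ^ (-(1/2) : ℝ)) s)
        =ᶠ[nhds t] fun s => -((x * (x - 1)) ^ (-(1/2) : ℝ) * (x + 2 * s) ^ (-(3/2) : ℝ)) := by
      filter_upwards [hop.mem_nhds hPt] with s hs
      exact hder s hs
    rw [hev2.deriv_eq,
      ((((hdP x (-(3/2)) t hPt.ne').const_mul ((x * (x - 1)) ^ (-(1/2) : ℝ)))).fun_neg).deriv,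
      show (-(3/2) - 1 : ℝ) = -(5/2) by norm_num]
    ring
  -- x-derivative of the RHS
  have h1 : HasDerivAt (fun y : ℝ => y * (y - 1)) (1 * (x - 1) + x * 1) x :=
    (hasDerivAt_id x).mul ((hasDerivAt_id x).sub_const 1)
  have h2 : HasDerivAt (fun y : ℝ => (y * (y - 1)) ^ ((1:ℝ)/2))
      ((1/2) * (x * (x - 1)) ^ ((1:ℝ)/2 - 1) * (1 * (x - 1) + x * 1)) x := by
    simpa [mul_assoc, Function.comp_def] using
      (Real.hasDerivAt_rpow_const (p := (1:ℝ)/2) (Or.inl hc.ne')).comp x h1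
  have h3 : HasDerivAt (fun y : ℝ => y + 2 * t) 1 x := (hasDerivAt_id x).add_const (2 * t)
  have h4 : HasDerivAt (fun y : ℝ => (y + 2 * t) ^ ((3:ℝ)/2))
      ((3:ℝ)/2 * (x + 2 * t) ^ ((3:ℝ)/2 - 1) * 1) x := by
    simpa [mul_assoc, Function.comp_def] using
      (Real.hasDerivAt_rpow_const (p := (3:ℝ)/2) (Or.inl hPt.ne')).comp x h3
  have h5 : HasDerivAt (fun y : ℝ => 2 * (y + 2 * t) ^ ((3:ℝ)/2))
      (2 * ((3:ℝ)/2 * (x + 2 * t) ^ ((3:ℝ)/2 - 1) * 1)) x := h4.const_mul 2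
  have hdne : 2 * (x + 2 * t) ^ ((3:ℝ)/2) ≠ 0 := by
    positivity
  have hg := (h2.fun_div h5 hdne).deriv
  rw [hder t hPt, hder2, hg]
  -- now pure rpow algebra
  have hA : 0 < (x * (x - 1)) ^ ((1:ℝ)/2) := Real.rpow_pos_of_pos hc _
  have hB : 0 < (x + 2 * t) ^ ((1:ℝ)/2) := Real.rpow_pos_of_pos hPt _
  set A := (x * (x - 1)) ^ ((1:ℝ)/2) with hAdef
  set B := (x + 2 * t) ^ ((1:ℝ)/2) with hBdef
  have hpow : ∀ n : ℕ, (x + 2 * t) ^ ((n : ℝ)/2) = B ^ n := by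
    intro n
    rw [hBdef, show ((n:ℝ)/2) = (1/2) * (n:ℝ) by ring, Real.rpow_mul hPt.le,
      Real.rpow_natCast]
  have hA2 : A ^ 2 = x * (x - 1) := by
    rw [hAdef, ← Real.rpow_natCast _ 2, ← Real.rpow_mul hc.le]
    norm_num
  have hB2 : B ^ 2 = x + 2 * t := by
    rw [hBdef, ← Real.rpow_natCast _ 2, ← Real.rpow_mul hPt.le]
    norm_num
  have eA : (x * (x - 1)) ^ (-(1/2) : ℝ) = A⁻¹ := by
    rw [show (-(1/2) : ℝ) = -((1:ℝ)/2) by norm_num, Real.rpow_neg hc.le]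
  have eA2 : (x * (x - 1)) ^ ((1:ℝ)/2 - 1) = A⁻¹ := by
    rw [show ((1:ℝ)/2 - 1) = -((1:ℝ)/2) by norm_num, Real.rpow_neg hc.le]
  have eB1 : (x + 2 * t) ^ (-(1/2) : ℝ) = B⁻¹ := by
    rw [show (-(1/2) : ℝ) = -((1:ℝ)/2) by norm_num, Real.rpow_neg hPt.le]
  have eB3 : (x + 2 * t) ^ (-(3/2) : ℝ) = (B ^ 3)⁻¹ := by
    rw [show (-(3/2) : ℝ) = -(((3:ℕ):ℝ)/2) by norm_num, Real.rpow_neg hPt.le, hpow 3]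
  have eB5 : (x + 2 * t) ^ (-(5/2) : ℝ) = (B ^ 5)⁻¹ := by
    rw [show (-(5/2) : ℝ) = -(((5:ℕ):ℝ)/2) by norm_num, Real.rpow_neg hPt.le, hpow 5]
  have eB3' : (x + 2 * t) ^ ((3:ℝ)/2) = B ^ 3 := by
    rw [show ((3:ℝ)/2) = ((3:ℕ):ℝ)/2 by norm_num, hpow 3]
  have eB1' : (x + 2 * t) ^ ((3:ℝ)/2 - 1) = B := by
    rw [show ((3:ℝ)/2 - 1) = ((1:ℕ):ℝ)/2 by norm_num, hpow 1, pow_one]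
  have euP : (x * (x - 1) * (x + 2 * t)) ^ (-(1/2) : ℝ) = A⁻¹ * B⁻¹ := by
    rw [Real.mul_rpow hc.le hPt.le, eA, eB1]
  rw [eA, eB3, eB5, eA2, eB3', eB1', euP]
  have hAne := hA.ne'
  have hBne := hB.ne'
  field_simp
  ring_nf
  linear_combination 12 * hA2 +
    (-(12*x + 4*B^2 - 24*t - 12)) * hB2
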